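/- Let c_i(n,k) be the number of signed permutations π ∈ B_n with exc_A(π) = k and neg(π) = i. Then c_i(n,0) = Σ_{1 ≤ t_1 < t_2 < ⋯ < t_i ≤ n} i! · (i+1)^{n−t_i} · Π_{u=1}^{i} u^{t_u − t_{u−1} − 1}, where t_0 = 0. -/

import Mathlib

open Finset Polynomial

/-- The group of colored permutations `G_{r,n} = Z_r ≀ S_n`, realized as bijections of the
colored alphabet `Σ = [n] × {0,…,r-1}` commuting with the color shift. -/
def ColoredPerm (r n : ℕ) [NeZero r] : Type :=
  {π : Equiv.Perm (Fin n × Fin r) //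
    ∀ x : Fin n × Fin r, π (x.1, x.2 + 1) = ((π x).1, (π x).2 + 1)}

/-- The color order on the colored alphabet:
`1^[r-1] < ⋯ < n^[r-1] < ⋯ < 1^[0] < ⋯ < n^[0]` (higher color is smaller). -/
def colorLt {r n : ℕ} (x y : Fin n × Fin r) : Prop :=
  y.2 < x.2 ∨ (x.2 = y.2 ∧ x.1 < y.1)

/-- The excedance number `exc` of a colored permutation. -/
noncomputable def cExc {r n : ℕ} [NeZero r] (π : ColoredPerm r n) : ℕ :=
  Nat.card {x : Fin n × Fin r // colorLt x (π.1 x)}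

/-- `exc_A(π) = |{i ∈ [n-1] : π(i) > i}|` (positions are the color-0 letters,
and `i ∈ [n-1]` corresponds to `i.val + 1 < n`). -/
noncomputable def cExcA {r n : ℕ} [NeZero r] (π : ColoredPerm r n) : ℕ :=
  Nat.card {i : Fin n // i.val + 1 < n ∧ colorLt (i, 0) (π.1 (i, 0))}

/-- `csum(π)`: the sum of the colors appearing in the window notation of `π`. -/
def csum {r n : ℕ} [NeZero r] (π : ColoredPerm r n) : ℕ :=
  ∑ i : Fin n, (π.1 (i, 0)).2.val

/-- `c_i(n,k)`: the number of signed permutations `π ∈ B_n` with `exc_A(π) = k` and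
`neg(π) = i`. -/
noncomputable def cB (n i k : ℕ) : ℕ :=
  Nat.card {π : ColoredPerm 2 n // cExcA π = k ∧ csum π = i}

/-- Given a subset `s = {t_1 < t_2 < ⋯ < t_i} ⊆ {1,…,n}`, `tEnum s u = t_u`
(with `tEnum s 0 = t_0 = 0`). -/
def tEnum (s : Finset ℕ) (u : ℕ) : ℕ :=
  if u = 0 then 0 else (s.sort (· ≤ ·)).getD (u - 1) 0

-- ========== auxiliary development ==========

instance {r n : ℕ} (x y : Fin n × Fin r) : Decidable (colorLt x y) := by
  unfold colorLt; infer_instance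

lemma fin2_cases (c : Fin 2) : c = 0 ∨ c = 1 := by revert c; decide

/-- the window map: a pair (absolute permutation, sign vector) gives a colored permutation. -/
def Phi (n : ℕ) (p : Equiv.Perm (Fin n) × (Fin n → Fin 2)) : ColoredPerm 2 n :=
  ⟨{ toFun := fun x => (p.1 x.1, p.2 x.1 + x.2)
     invFun := fun y => (p.1.symm y.1, y.2 - p.2 (p.1.symm y.1))
     left_inv := by
       intro x
       simp [add_sub_cancel_left]
     right_inv := by
       intro y
       simp [add_comm, sub_add_cancel] },
   by
     intro x
     simp [add_assoc]⟩

lemma Phi_bijective (n : ℕ) : Function.Bijective (Phi n) := by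
  constructor
  · intro p q h
    have h2 : ∀ i : Fin n, (p.1 i, p.2 i + 0) = (q.1 i, q.2 i + 0) := by
      intro i
      exact congrFun (congrArg (fun (π : ColoredPerm 2 n) => π.1.toFun) h) (i, 0)
    have hσ : p.1 = q.1 := Equiv.ext fun i => congrArg Prod.fst (h2 i)
    have hε : p.2 = q.2 := funext fun i => by
      have := congrArg Prod.snd (h2 i)
      simpa using this
    exact Prod.ext hσ hε
  · intro π
    set f : Fin n → Fin n := fun i => (π.1 (i, 0)).1 with hf
    set ε : Fin n → Fin 2 := fun i => (π.1 (i, 0)).2 with hε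
    have hinj : Function.Injective f := by
      intro i i' h
      by_cases hc : ε i = ε i'
      · have : π.1 (i, 0) = π.1 (i', 0) := by
          have h1 : π.1 (i, 0) = (f i, ε i) := rfl
          have h2 : π.1 (i', 0) = (f i', ε i') := rfl
          rw [h1, h2, h, hc]
        exact congrArg Prod.fst (π.1.injective this)
      · have hc1 : ε i' = ε i + 1 := by
          rcases fin2_cases (ε i) with hh | hh <;> rcases fin2_cases (ε i') with hh' | hh' <;>
            rw [hh, hh'] at hc ⊢ <;> first | rfl | exact absurd rfl hc | decide
        have : π.1 (i', 0) = π.1 (i, (0 : Fin 2) + 1) := by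
          rw [π.2 (i, 0)]
          show (f i', ε i') = (f i, ε i + 1)
          rw [h, hc1]
        have := π.1.injective this
        have h0 : (0 : Fin 2) = 0 + 1 := congrArg Prod.snd this
        simp at h0
    have hbij : Function.Bijective f := Finite.injective_iff_bijective.1 hinj
    refine ⟨(Equiv.ofBijective f hbij, ε), ?_⟩
    apply Subtype.ext
    apply Equiv.ext
    intro x
    rcases fin2_cases x.2 with h2 | h2
    · show (f x.1, ε x.1 + x.2) = π.1 x
      have hx : x = (x.1, 0) := by rw [← h2]
      rw [hx]
      show (f x.1, ε x.1 + 0) = π.1 (x.1, 0)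
      rw [add_zero]
    · show (f x.1, ε x.1 + x.2) = π.1 x
      have hx : x = (x.1, (0 : Fin 2) + 1) := by
        have h01 : ((0 : Fin 2) + 1) = x.2 := by rw [h2]; decide
        rw [h01]
      rw [hx, π.2 (x.1, 0)]
      rfl

lemma sum_val_eq_card (n : ℕ) (ε : Fin n → Fin 2) :
    ∑ j, (ε j).val = (univ.filter fun j => ε j = 1).card := by
  classical
  rw [Finset.card_filter]
  apply Finset.sum_congr rfl
  intro j _
  rcases fin2_cases (ε j) with h | h <;> simp [h]

lemma cB_eq_sum (n i : ℕ) :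
    cB n i 0 = ∑ P ∈ powersetCard i (univ : Finset (Fin n)),
      (univ.filter (fun σ : Equiv.Perm (Fin n) =>
        ∀ j : Fin n, (j : ℕ) + 1 < n → j ∉ P → σ j ≤ j)).card := by
  classical
  -- transfer through Phi
  have e1 : {p : Equiv.Perm (Fin n) × (Fin n → Fin 2) //
          (∀ j : Fin n, (j : ℕ) + 1 < n → p.2 j = 0 → p.1 j ≤ j) ∧
          ∑ j, (p.2 j).val = i}
      ≃ {π : ColoredPerm 2 n // cExcA π = 0 ∧ csum π = i} := by
    refine (Equiv.subtypeEquiv (Equiv.ofBijective (Phi n) (Phi_bijective n)) ?_)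
    intro p
    show _ ↔ (cExcA (Phi n p) = 0 ∧ csum (Phi n p) = i)
    have hexc : cExcA (Phi n p) = 0 ↔
        ∀ j : Fin n, (j : ℕ) + 1 < n → p.2 j = 0 → p.1 j ≤ j := by
      rw [cExcA, Nat.card_eq_fintype_card, Fintype.card_eq_zero_iff, isEmpty_subtype]
      apply forall_congr'
      intro j
      have : (Phi n p).1 (j, 0) = (p.1 j, p.2 j + 0) := rfl
      rw [this]
      unfold colorLt
      simp only [add_zero]
      constructor
      · intro h hj hz
        by_contra hlt
        exact h ⟨hj, Or.inr ⟨hz.symm, not_le.1 hlt⟩⟩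
      · rintro h ⟨hj, hcol⟩
        rcases hcol with hneg | ⟨hz, hlt⟩
        · exact absurd hneg (Fin.not_lt_zero _)
        · exact absurd (h hj hz.symm) (not_le.2 hlt)
    have hcs : csum (Phi n p) = ∑ j, (p.2 j).val := by
      unfold csum
      apply Finset.sum_congr rfl
      intro j _
      have : (Phi n p).1 (j, 0) = (p.1 j, p.2 j + 0) := rfl
      rw [this]
      simp
    rw [hexc, hcs]
  rw [cB, Nat.card_congr e1.symm, Nat.card_eq_fintype_card, Fintype.card_subtype]
  -- fiber over the sign vector
  have hmap : ∀ p ∈ (univ.filter (fun p : Equiv.Perm (Fin n) × (Fin n → Fin 2) =>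
      (∀ j : Fin n, (j : ℕ) + 1 < n → p.2 j = 0 → p.1 j ≤ j) ∧ ∑ j, (p.2 j).val = i)),
      (univ.filter fun j => p.2 j = 1) ∈ powersetCard i (univ : Finset (Fin n)) := by
    intro p hp
    simp only [mem_filter, mem_univ, true_and] at hp
    rw [mem_powersetCard]
    exact ⟨subset_univ _, by rw [← sum_val_eq_card]; exact hp.2⟩
  rw [card_eq_sum_card_fiberwise hmap]
  apply Finset.sum_congr rfl
  intro P hP
  rw [mem_powersetCard] at hP
  have hfib : (univ.filter (fun p : Equiv.Perm (Fin n) × (Fin n → Fin 2) =>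
        (∀ j : Fin n, (j : ℕ) + 1 < n → p.2 j = 0 → p.1 j ≤ j) ∧
          ∑ j, (p.2 j).val = i)).filter
        (fun p => (univ.filter fun j => p.2 j = 1) = P)
      = (univ.filter (fun σ : Equiv.Perm (Fin n) =>
          ∀ j : Fin n, (j : ℕ) + 1 < n → j ∉ P → σ j ≤ j)).image
        (fun σ => (σ, fun j => if j ∈ P then (1 : Fin 2) else 0)) := by
    ext p
    simp only [mem_filter, mem_univ, true_and, mem_image]
    constructor
    · rintro ⟨⟨hb, hs⟩, hfil⟩
      have hε : p.2 = fun j => if j ∈ P then (1 : Fin 2) else 0 := by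
        funext j
        by_cases hj : j ∈ P
        · rw [if_pos hj]
          rw [← hfil] at hj
          exact (mem_filter.1 hj).2
        · rw [if_neg hj]
          rcases fin2_cases (p.2 j) with h | h
          · exact h
          · exact absurd (by rw [← hfil]; simp [h] : j ∈ _) hj
      refine ⟨p.1, ?_, ?_⟩
      · intro j hj hjP
        apply hb j hj
        rw [hε]
        simp [hjP]
      · rw [← hε]
    · rintro ⟨σ, hσ, rfl⟩
      refine ⟨⟨?_, ?_⟩, ?_⟩
      · intro j hj hz
        apply hσ j hj
        intro hjP
        simp only [if_pos hjP] at hz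
        exact absurd hz (by decide)
      · rw [sum_val_eq_card]
        have : (univ.filter fun j => (if j ∈ P then (1 : Fin 2) else 0) = 1) = P := by
          ext j
          by_cases hj : j ∈ P <;> simp [hj]
        rw [this, hP.2]
      · ext j
        by_cases hj : j ∈ P <;> simp [hj]
  rw [hfib, card_image_of_injective _ (fun a b h => congrArg Prod.fst h)]

variable {n : ℕ}


/-- bounded partial injections supported on `C`, extended by the identity off `C`. -/
def injF (n : ℕ) (C : Finset (Fin n)) : Finset (Fin n → Fin n) :=
  univ.filter (fun g => (∀ j ∈ C, g j ≤ j) ∧ (∀ j ∈ C, ∀ k ∈ C, g j = g k → j = k) ∧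
    ∀ j, j ∉ C → g j = j)

lemma injF_card (C : Finset (Fin n)) :
    (injF n C).card = ∏ j ∈ C, ((j : ℕ) + 1 - (C.filter (· < j)).card) := by
  induction C using Finset.strongInduction with
  | _ C ih =>
    rcases C.eq_empty_or_nonempty with rfl | hC
    · rw [prod_empty]
      rw [show injF n ∅ = {fun j => j} from ?_, card_singleton]
      ext g
      simp only [injF, mem_filter, mem_univ, true_and, notMem_empty, false_implies,
        implies_true, true_and, mem_singleton]
      constructor
      · intro h; funext j; exact h j not_false
      · rintro rfl; simp
    · set M := C.max' hC with hMdef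
      have hM : M ∈ C := C.max'_mem hC
      set C' := C.erase M with hC'def
      have hsub : C' ⊂ C := erase_ssubset hM
      have hlt : ∀ j ∈ C', j < M := fun j hj =>
        lt_of_le_of_ne (C.le_max' j (mem_of_mem_erase hj)) (ne_of_mem_erase hj)
      -- fiberwise count over restriction to C'
      have hmap : ∀ g ∈ injF n C, Function.update g M M ∈ injF n C' := by
        intro g hg
        simp only [injF, mem_filter, mem_univ, true_and] at hg ⊢
        obtain ⟨h1, h2, h3⟩ := hg
        refine ⟨?_, ?_, ?_⟩
        · intro j hj
          rw [Function.update_of_ne (ne_of_mem_erase hj)]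
          exact h1 j (mem_of_mem_erase hj)
        · intro j hj k hk
          rw [Function.update_of_ne (ne_of_mem_erase hj),
            Function.update_of_ne (ne_of_mem_erase hk)]
          exact h2 j (mem_of_mem_erase hj) k (mem_of_mem_erase hk)
        · intro j hj
          rcases eq_or_ne j M with rfl | hne
          · simp
          · rw [Function.update_of_ne hne]
            exact h3 j (fun h => hj (mem_erase.2 ⟨hne, h⟩))
      rw [card_eq_sum_card_fiberwise hmap]
      -- each fiber has size M+1 - C'.card
      have hfiber : ∀ g' ∈ injF n C',
          ((injF n C).filter (fun g => Function.update g M M = g')).card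
            = (M : ℕ) + 1 - C'.card := by
        intro g' hg'
        simp only [injF, mem_filter, mem_univ, true_and] at hg'
        obtain ⟨h1, h2, h3⟩ := hg'
        have himg : C'.image g' ⊆ Iic M := by
          intro v hv
          simp only [mem_image] at hv
          obtain ⟨j, hj, rfl⟩ := hv
          exact mem_Iic.2 (le_of_lt (lt_of_le_of_lt (h1 j hj) (hlt j hj)))
        have hkey : (injF n C).filter (fun g => Function.update g M M = g')
            = (Iic M \ C'.image g').image (fun v => Function.update g' M v) := by
          ext g
          simp only [mem_filter, mem_image, mem_sdiff, mem_Iic, injF, mem_univ, true_and]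
          constructor
          · rintro ⟨⟨h1g, h2g, h3g⟩, rfl⟩
            refine ⟨g M, ⟨h1g M hM, ?_⟩, ?_⟩
            · rintro hmem
              obtain ⟨j, hj, hgj⟩ := hmem
              rw [Function.update_of_ne (ne_of_mem_erase hj)] at hgj
              exact (ne_of_mem_erase hj) (h2g j (mem_of_mem_erase hj) M hM hgj)
            · funext j
              rcases eq_or_ne j M with rfl | hne
              · simp
              · rw [Function.update_of_ne hne, Function.update_of_ne hne]
          · rintro ⟨v, ⟨hvle, hvnot⟩, rfl⟩
            have hvC' : ∀ j ∈ C', g' j ≠ v := by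
              intro j hj h
              exact hvnot ⟨j, hj, h⟩
            refine ⟨⟨?_, ?_, ?_⟩, ?_⟩
            · intro j hj
              rcases eq_or_ne j M with rfl | hne
              · rw [Function.update_self]; exact hvle
              · rw [Function.update_of_ne hne]
                exact h1 j (mem_erase.2 ⟨hne, hj⟩)
            · intro j hj k hk heq
              rcases eq_or_ne j M with rfl | hnej <;> rcases eq_or_ne k M with rfl | hnek
              · rfl
              · rw [Function.update_self, Function.update_of_ne hnek] at heq
                exact absurd heq.symm (hvC' k (mem_erase.2 ⟨hnek, hk⟩))
              · rw [Function.update_self, Function.update_of_ne hnej] at heq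
                exact absurd heq (hvC' j (mem_erase.2 ⟨hnej, hj⟩))
              · rw [Function.update_of_ne hnej, Function.update_of_ne hnek] at heq
                exact h2 j (mem_erase.2 ⟨hnej, hj⟩) k (mem_erase.2 ⟨hnek, hk⟩) heq
            · intro j hj
              have hne : j ≠ M := fun h => hj (h ▸ hM)
              rw [Function.update_of_ne hne]
              exact h3 j (fun h => hj (mem_of_mem_erase h))
            · funext j
              rcases eq_or_ne j M with rfl | hne
              · simp [h3 M (notMem_erase M C)]
              · rw [Function.update_of_ne hne, Function.update_of_ne hne]
        rw [hkey, card_image_of_injOn, card_sdiff_of_subset himg, Fin.card_Iic,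
          card_image_of_injOn]
        · intro j hj k hk h
          exact h2 j (by simpa using hj) k (by simpa using hk) h
        · intro v hv w hw h
          have := congrFun h M
          simpa using this
      rw [sum_congr rfl hfiber, sum_const, smul_eq_mul, ih C' hsub]
      have hprod : ∀ j ∈ C', (C.filter (· < j)).card = (C'.filter (· < j)).card := by
        intro j hj
        congr 1
        ext k
        simp only [mem_filter, hC'def, mem_erase]
        constructor
        · rintro ⟨hk, hlt'⟩
          exact ⟨⟨fun h => absurd (h ▸ hlt') (lt_asymm (hlt j hj) ∘ id) , hk⟩, hlt'⟩
        · rintro ⟨⟨-, hk⟩, hlt'⟩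
          exact ⟨hk, hlt'⟩
      have hfacM : (C.filter (· < M)).card = C'.card := by
        congr 1
        ext k
        simp only [mem_filter, hC'def, mem_erase]
        constructor
        · rintro ⟨hk, hlt'⟩
          exact ⟨ne_of_lt hlt', hk⟩
        · rintro ⟨hne, hk⟩
          exact ⟨hk, lt_of_le_of_ne (C.le_max' k hk) hne⟩
      rw [← Finset.mul_prod_erase C _ hM, ← hC'def, hfacM]
      have hpe : ∏ j ∈ C', ((j : ℕ) + 1 - (C.filter (· < j)).card)
          = ∏ j ∈ C', ((j : ℕ) + 1 - (C'.filter (· < j)).card) :=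
        Finset.prod_congr rfl (fun j hj => by rw [hprod j hj])
      rw [hpe]
      ring


lemma extension_card (C : Finset (Fin n)) (g : Fin n → Fin n)
    (hg : ∀ j ∈ C, ∀ k ∈ C, g j = g k → j = k) :
    (univ.filter (fun σ : Equiv.Perm (Fin n) => ∀ j ∈ C, σ j = g j)).card
      = (n - C.card).factorial := by
  classical
  have hg' : Set.InjOn g (↑C : Set (Fin n)) := fun a ha b hb h => hg a ha b hb h
  set e₀ := Equiv.Set.imageOfInjOn g (↑C : Set (Fin n)) hg' with he₀
  have key : {σ : Equiv.Perm (Fin n) // ∀ j ∈ C, σ j = g j}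
      ≃ ((↑(↑C : Set (Fin n))ᶜ : Set (Fin n)) ≃ (↑(g '' (↑C : Set (Fin n)))ᶜ : Set (Fin n))) := by
    refine Equiv.trans ?_ (Equiv.Set.compl e₀)
    exact Equiv.subtypeEquivRight (fun σ => by
      constructor
      · intro h x
        exact h x.1 (by exact_mod_cast x.2)
      · intro h j hj
        exact h ⟨j, by exact_mod_cast hj⟩)
  rw [← Fintype.card_subtype]
  rw [Fintype.card_congr key]
  have hcards : Fintype.card (↑(↑C : Set (Fin n))ᶜ : Set (Fin n)) = n - C.card := by
    rw [Fintype.card_compl_set]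
    simp [Fintype.card_coe]
  have hcardt : Fintype.card (↑(g '' (↑C : Set (Fin n)))ᶜ : Set (Fin n)) = n - C.card := by
    rw [Fintype.card_compl_set]
    have : Fintype.card (g '' (↑C : Set (Fin n))) = Fintype.card (↑C : Set (Fin n)) :=
      (Fintype.card_congr e₀).symm
    rw [this]
    simp [Fintype.card_coe]
  rw [Fintype.card_equiv (Fintype.equivOfCardEq (hcards.trans hcardt.symm)), hcards]


lemma NB_card (C : Finset (Fin n)) :
    (univ.filter (fun σ : Equiv.Perm (Fin n) => ∀ j ∈ C, σ j ≤ j)).card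
      = (injF n C).card * (n - C.card).factorial := by
  classical
  have hmap : ∀ σ ∈ univ.filter (fun σ : Equiv.Perm (Fin n) => ∀ j ∈ C, σ j ≤ j),
      (fun j => if j ∈ C then σ j else j) ∈ injF n C := by
    intro σ hσ
    simp only [mem_filter, mem_univ, true_and] at hσ
    simp only [injF, mem_filter, mem_univ, true_and]
    refine ⟨fun j hj => by simp [hj]; exact hσ j hj, fun j hj k hk h => ?_, fun j hj => by simp [hj]⟩
    simp only [if_pos hj, if_pos hk] at h
    exact σ.injective h
  rw [card_eq_sum_card_fiberwise hmap]
  have hfib : ∀ g ∈ injF n C,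
      ((univ.filter (fun σ : Equiv.Perm (Fin n) => ∀ j ∈ C, σ j ≤ j)).filter
        (fun σ => (fun j => if j ∈ C then σ j else j) = g)).card
      = (n - C.card).factorial := by
    intro g hgmem
    simp only [injF, mem_filter, mem_univ, true_and] at hgmem
    obtain ⟨hb, hinj, hid⟩ := hgmem
    rw [← extension_card C g hinj]
    congr 1
    ext σ
    simp only [mem_filter, mem_univ, true_and]
    constructor
    · rintro ⟨h1, h2⟩ j hj
      have := congrFun h2 j
      rwa [if_pos hj] at this
    · intro h
      refine ⟨fun j hj => (h j hj) ▸ hb j hj, funext fun j => ?_⟩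
      by_cases hj : j ∈ C
      · rw [if_pos hj]; exact h j hj
      · rw [if_neg hj]; exact (hid j hj).symm
  rw [sum_congr rfl hfib, sum_const, smul_eq_mul]
lemma prodRankFactorial {α : Type*} [LinearOrder α] (P : Finset α) :
    ∏ j ∈ P, ((P.filter (· < j)).card + 1) = P.card.factorial := by
  classical
  induction P using Finset.strongInduction with
  | _ P ih =>
    rcases P.eq_empty_or_nonempty with rfl | hP
    · simp
    · set M := P.max' hP with hMdef
      have hM : M ∈ P := P.max'_mem hP
      rw [← Finset.mul_prod_erase P _ hM]
      have h1 : (P.filter (· < M)).card = (P.erase M).card := by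
        congr 1; ext k
        simp only [mem_filter, mem_erase]
        exact ⟨fun ⟨hk, hl⟩ => ⟨ne_of_lt hl, hk⟩,
          fun ⟨hne, hk⟩ => ⟨hk, lt_of_le_of_ne (P.le_max' k hk) hne⟩⟩
      have h2 : ∏ j ∈ P.erase M, ((P.filter (· < j)).card + 1)
          = ∏ j ∈ P.erase M, (((P.erase M).filter (· < j)).card + 1) := by
        apply Finset.prod_congr rfl
        intro j hj
        have hjM : j < M :=
          lt_of_le_of_ne (P.le_max' j (mem_of_mem_erase hj)) (ne_of_mem_erase hj)
        congr 2
        ext k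
        simp only [mem_filter, mem_erase]
        exact ⟨fun ⟨hk, hl⟩ => ⟨⟨ne_of_lt (lt_trans hl hjM), hk⟩, hl⟩,
          fun ⟨⟨_, hk⟩, hl⟩ => ⟨hk, hl⟩⟩
      rw [h1, h2, ih (P.erase M) (erase_ssubset hM), card_erase_of_mem hM]
      have hc : P.card = (P.card - 1) + 1 := (Nat.succ_pred_eq_of_pos (card_pos.2 hP)).symm
      conv_rhs => rw [hc]
      rw [Nat.factorial_succ]

lemma count_eq_V (n : ℕ) (P : Finset (Fin n)) :
    (univ.filter (fun σ : Equiv.Perm (Fin n) =>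
        ∀ j : Fin n, (j : ℕ) + 1 < n → j ∉ P → σ j ≤ j)).card
      = ∏ j : Fin n, ((P.filter (· < j)).card + 1) := by
  classical
  set C : Finset (Fin n) := univ.filter (fun j => j ∉ P ∧ (j : ℕ) + 1 < n) with hCdef
  have hpred : (univ.filter (fun σ : Equiv.Perm (Fin n) =>
      ∀ j : Fin n, (j : ℕ) + 1 < n → j ∉ P → σ j ≤ j))
      = (univ.filter (fun σ : Equiv.Perm (Fin n) => ∀ j ∈ C, σ j ≤ j)) := by
    ext σ
    simp only [mem_filter, mem_univ, true_and, hCdef]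
    constructor
    · intro h j hj
      exact h j hj.2 hj.1
    · intro h j hj hjP
      exact h j ⟨hjP, hj⟩
  rw [hpred, NB_card, injF_card]
  -- the factors over C
  have hfac : ∀ j ∈ C, (j : ℕ) + 1 - (C.filter (· < j)).card
      = (P.filter (· < j)).card + 1 := by
    intro j hj
    simp only [hCdef, mem_filter, mem_univ, true_and] at hj
    have hsplit : ((Iio j).filter (· ∈ P)).card + ((Iio j).filter (· ∉ P)).card
        = (j : ℕ) := by
      rw [Finset.card_filter_add_card_filter_not, Fin.card_Iio]
    have hPf : (Iio j).filter (· ∈ P) = P.filter (· < j) := by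
      ext k; simp only [mem_filter, mem_Iio]; exact ⟨fun ⟨a, b⟩ => ⟨b, a⟩, fun ⟨a, b⟩ => ⟨b, a⟩⟩
    have hCf : (Iio j).filter (· ∉ P) = C.filter (· < j) := by
      ext k
      simp only [mem_filter, mem_Iio, hCdef, mem_univ, true_and]
      constructor
      · rintro ⟨hk, hkP⟩
        have : (k : ℕ) < (j : ℕ) := hk
        exact ⟨⟨hkP, by omega⟩, hk⟩
      · rintro ⟨⟨hkP, -⟩, hk⟩
        exact ⟨hk, hkP⟩
    rw [hPf, hCf] at hsplit
    have hle : ((P.filter (· < j)).card : ℕ) ≤ (j : ℕ) := by omega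
    omega
  rw [Finset.prod_congr rfl hfac]
  -- split the RHS product
  rw [← Finset.prod_filter_mul_prod_filter_not univ (· ∈ P)
    (fun j => (P.filter (· < j)).card + 1)]
  have hPuniv : univ.filter (· ∈ P) = P := by ext k; simp
  rw [hPuniv, prodRankFactorial]
  rw [← Finset.prod_filter_mul_prod_filter_not (univ.filter (· ∉ P))
    (fun j : Fin n => (j : ℕ) + 1 < n) (fun j : Fin n => (P.filter (· < j)).card + 1)]
  have hCC : (univ.filter (· ∉ P)).filter (fun j : Fin n => (j : ℕ) + 1 < n) = C := by
    ext k; simp only [mem_filter, mem_univ, true_and, hCdef, and_assoc]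
  rw [hCC]
  rcases Nat.eq_zero_or_pos n with rfl | hn
  · have hC : C = ∅ := eq_empty_of_isEmpty C
    have hP0 : P = ∅ := eq_empty_of_isEmpty P
    simp [hC, hP0]
  · set L : Fin n := ⟨n - 1, by omega⟩ with hLdef
    have hRest : (univ.filter (· ∉ P)).filter (fun j : Fin n => ¬((j : ℕ) + 1 < n))
        = if L ∈ P then ∅ else {L} := by
      ext k
      simp only [mem_filter, mem_univ, true_and]
      by_cases hLP : L ∈ P
      · rw [if_pos hLP]
        simp only [notMem_empty, iff_false, not_and, not_not]
        intro hkP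
        by_contra hlt
        have hk : k = L := by
          apply Fin.ext
          simp only [hLdef]
          omega
        exact hkP (hk ▸ hLP)
      · rw [if_neg hLP]
        simp only [mem_singleton]
        constructor
        · rintro ⟨hkP, hlt⟩
          apply Fin.ext
          simp only [hLdef]
          omega
        · rintro rfl
          exact ⟨hLP, by simp [hLdef]; omega⟩
    rw [hRest]
    by_cases hLP : L ∈ P
    · rw [if_pos hLP, prod_empty, mul_one]
      have hCeq : C = univ.filter (· ∉ P) := by
        ext j
        simp only [hCdef, mem_filter, mem_univ, true_and]
        constructor
        · rintro ⟨a, -⟩; exact a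
        · intro hjP
          refine ⟨hjP, ?_⟩
          have : j ≠ L := fun h => hjP (h ▸ hLP)
          have : (j : ℕ) ≠ n - 1 := fun h => this (Fin.ext (by simp [hLdef, h]))
          have := j.isLt
          omega
      have hcompl : univ.filter (· ∉ P) = Pᶜ := by ext k; simp
      have hCcard : C.card = n - P.card := by
        rw [hCeq, hcompl, card_compl, Fintype.card_fin]
      have hPle : P.card ≤ n := by
        have := card_le_card (subset_univ P)
        simpa [card_univ] using this
      rw [mul_comm (P.card.factorial)]
      congr 2
      omega
    · rw [if_neg hLP, prod_singleton]
      have hPL : P.filter (· < L) = P := by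
        ext k
        simp only [mem_filter, and_iff_left_iff_imp]
        intro hk
        have : k ≠ L := fun h => hLP (h ▸ hk)
        have hkv : (k : ℕ) ≠ n - 1 := fun h => this (Fin.ext (by simp [hLdef, h]))
        have := k.isLt
        rw [Fin.lt_def]
        simp only [hLdef]
        omega
      rw [hPL]
      have hcompl : univ.filter (· ∉ P) = Pᶜ := by ext k; simp
      have hCeq : C = Pᶜ.erase L := by
        ext j
        simp only [hCdef, mem_filter, mem_univ, true_and, mem_erase, mem_compl]
        constructor
        · rintro ⟨hjP, hlt⟩
          refine ⟨?_, hjP⟩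
          intro h
          rw [h] at hlt
          simp only [hLdef] at hlt
          omega
        · rintro ⟨hne, hjP⟩
          refine ⟨hjP, ?_⟩
          have : (j : ℕ) ≠ n - 1 := fun h => hne (Fin.ext (by simp [hLdef, h]))
          have := j.isLt
          omega
      have hCcard : C.card = n - P.card - 1 := by
        rw [hCeq, card_erase_of_mem (by simp [mem_compl, hLP]), card_compl, Fintype.card_fin]
      have hPlt : P.card < n := by
        have : P ⊂ univ := Finset.ssubset_univ_iff.mpr (fun h => hLP (h ▸ mem_univ L))
        have := Finset.card_lt_card this
        simpa [card_univ] using this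
      have : n - C.card = P.card + 1 + 1 - 1 := by omega
      rw [hCcard]
      have harg : n - (n - P.card - 1) = P.card + 1 := by omega
      rw [harg, Nat.factorial_succ]
      ring
def W (n : ℕ) (s : Finset ℕ) : ℕ := ∏ j ∈ Icc 1 n, ((s.filter (· < j)).card + 1)

lemma tEnum_zero (s : Finset ℕ) : tEnum s 0 = 0 := rfl

lemma sort_insert_max (s : Finset ℕ) (a : ℕ) (h : ∀ x ∈ s, x < a) :
    (insert a s).sort (· ≤ ·) = s.sort (· ≤ ·) ++ [a] := by
  have ha : a ∉ s := fun hx => lt_irrefl a (h a hx)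
  refine (fun hp h1 h2 => List.Perm.eq_of_pairwise' (r := fun x y : ℕ => x ≤ y) h1 h2 hp) ?_ ?_ ?_
  · exact (Finset.sort_perm_toList _ _).trans
      ((Finset.toList_insert ha).trans
        ((((Finset.sort_perm_toList s (· ≤ ·)).symm).cons a).trans
          (List.perm_append_singleton a _).symm))
  · exact Finset.pairwise_sort _ _
  · rw [List.pairwise_append]
    refine ⟨Finset.pairwise_sort _ _, List.pairwise_singleton _ _, ?_⟩
    intro x hx b hb
    rw [List.mem_singleton] at hb
    subst hb
    exact le_of_lt (h x ((Finset.mem_sort _).1 hx))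

lemma tEnum_insert_of_le (s : Finset ℕ) (a u : ℕ) (h : ∀ x ∈ s, x < a)
    (hu : u ≤ s.card) : tEnum (insert a s) u = tEnum s u := by
  rcases Nat.eq_zero_or_pos u with rfl | hu1
  · rfl
  · unfold tEnum
    rw [if_neg (by omega), if_neg (by omega), sort_insert_max s a h,
      List.getD_append _ _ _ _ (by rw [Finset.length_sort]; omega)]

lemma tEnum_insert_top (s : Finset ℕ) (a : ℕ) (h : ∀ x ∈ s, x < a) :
    tEnum (insert a s) (s.card + 1) = a := by
  unfold tEnum
  rw [if_neg (by omega), sort_insert_max s a h,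
    List.getD_append_right _ _ _ _ (by rw [Finset.length_sort]; omega)]
  simp [Finset.length_sort]

lemma tEnum_mem (s : Finset ℕ) (u : ℕ) (h1 : 1 ≤ u) (h2 : u ≤ s.card) :
    tEnum s u ∈ s := by
  unfold tEnum
  rw [if_neg (by omega), List.getD_eq_getElem _ _ (by rw [Finset.length_sort]; omega)]
  exact (Finset.mem_sort _).1 (List.getElem_mem _)

lemma term_eq_W : ∀ (n : ℕ) (s : Finset ℕ), s ⊆ Icc 1 n →
    s.card.factorial * (s.card + 1) ^ (n - tEnum s s.card) *
      ∏ u ∈ Icc 1 s.card, u ^ (tEnum s u - tEnum s (u - 1) - 1) = W n s := by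
  intro n
  induction n with
  | zero =>
    intro s hs
    have : s = ∅ := by
      rw [← Finset.subset_empty]
      rwa [show Icc 1 0 = (∅ : Finset ℕ) by simp] at hs
    subst this
    simp [tEnum_zero, W]
  | succ n ih =>
    intro s hs
    by_cases hmem : n + 1 ∈ s
    · -- split off the max element n+1
      set s' := s.erase (n + 1) with hs'def
      have hins : s = insert (n + 1) s' := (Finset.insert_erase hmem).symm
      have hlt : ∀ x ∈ s', x < n + 1 := by
        intro x hx
        have hxs : x ∈ s := Finset.mem_of_mem_erase hx
        have := Finset.mem_Icc.1 (hs hxs)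
        have hne := Finset.ne_of_mem_erase hx
        omega
      have hs'sub : s' ⊆ Icc 1 n := by
        intro x hx
        have := Finset.mem_Icc.1 (hs (Finset.mem_of_mem_erase hx))
        have := hlt x hx
        rw [Finset.mem_Icc]
        omega
      have hcard : s.card = s'.card + 1 := by
        rw [hins, Finset.card_insert_of_notMem (Finset.notMem_erase _ _)]
      have htop : tEnum s (s'.card + 1) = n + 1 := by
        rw [hins]; exact tEnum_insert_top s' (n + 1) hlt
      have hagree : ∀ u, u ≤ s'.card → tEnum s u = tEnum s' u := by
        intro u hu
        rw [hins]; exact tEnum_insert_of_le s' (n + 1) u hlt hu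
      -- W recursion
      have hWs : W (n + 1) s = W n s' * (s'.card + 1) := by
        unfold W
        rw [Finset.prod_Icc_succ_top (by omega)]
        congr 1
        · apply Finset.prod_congr rfl
          intro j hj
          have hj' := Finset.mem_Icc.1 hj
          congr 2
          ext x
          simp only [mem_filter, hs'def, Finset.mem_erase]
          constructor
          · rintro ⟨hx, hlt'⟩; exact ⟨⟨by omega, hx⟩, hlt'⟩
          · rintro ⟨⟨-, hx⟩, hlt'⟩; exact ⟨hx, hlt'⟩
        · congr 1
          have : s.filter (· < n + 1) = s' := by
            ext x
            simp only [mem_filter, hs'def, Finset.mem_erase]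
            constructor
            · rintro ⟨hx, hlt'⟩; exact ⟨by omega, hx⟩
            · rintro ⟨hne, hx⟩
              have := Finset.mem_Icc.1 (hs hx)
              exact ⟨hx, by omega⟩
          rw [this]
      rw [hWs, ← ih s' hs'sub, hcard]
      -- algebra
      have htop' : tEnum s (s'.card + 1) = n + 1 := htop
      rw [Finset.prod_Icc_succ_top (by omega)]
      have hprodeq : ∏ u ∈ Icc 1 s'.card, u ^ (tEnum s u - tEnum s (u - 1) - 1)
          = ∏ u ∈ Icc 1 s'.card, u ^ (tEnum s' u - tEnum s' (u - 1) - 1) := by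
        apply Finset.prod_congr rfl
        intro u hu
        have hu' := Finset.mem_Icc.1 hu
        rw [hagree u (by omega), hagree (u - 1) (by omega)]
      rw [hprodeq]
      have h12 : s'.card + 1 - 1 = s'.card := by omega
      rw [htop', h12, hagree s'.card (le_refl _)]
      have htle : tEnum s' s'.card ≤ n := by
        rcases Nat.eq_zero_or_pos s'.card with h0 | h1
        · rw [h0, tEnum_zero]; omega
        · have := Finset.mem_Icc.1 (hs'sub (tEnum_mem s' s'.card h1 (le_refl _)))
          omega
      have h1 : n + 1 - (n + 1) = 0 := by omega
      have h2 : n + 1 - tEnum s' s'.card - 1 = n - tEnum s' s'.card := by omega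
      rw [h1, h2, pow_zero, mul_one, Nat.factorial_succ]
      ring
    · -- n+1 not in s
      have hssub : s ⊆ Icc 1 n := by
        intro x hx
        have := Finset.mem_Icc.1 (hs hx)
        have : x ≠ n + 1 := fun h => hmem (h ▸ hx)
        rw [Finset.mem_Icc]
        omega
      have hWs : W (n + 1) s = W n s * (s.card + 1) := by
        unfold W
        rw [Finset.prod_Icc_succ_top (by omega)]
        congr 2
        rw [Finset.filter_true_of_mem]
        intro x hx
        have := Finset.mem_Icc.1 (hssub hx)
        omega
      rw [hWs, ← ih s hssub]
      have htle : tEnum s s.card ≤ n := by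
        rcases Nat.eq_zero_or_pos s.card with h0 | h1
        · rw [h0, tEnum_zero]; omega
        · have := Finset.mem_Icc.1 (hssub (tEnum_mem s s.card h1 (le_refl _)))
          omega
      have hexp : n + 1 - tEnum s s.card = (n - tEnum s s.card) + 1 := by omega
      rw [hexp, pow_succ]
      ring
lemma upInj {n : ℕ} : Function.Injective (fun k : Fin n => (k : ℕ) + 1) := by
  intro a b h
  simp only [add_left_inj] at h
  exact Fin.ext h

lemma V_eq_W (n : ℕ) (P : Finset (Fin n)) :
    ∏ j : Fin n, ((P.filter (· < j)).card + 1)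
      = W n (P.image (fun j : Fin n => (j : ℕ) + 1)) := by
  unfold W
  apply Finset.prod_bij (fun (j : Fin n) _ => (j : ℕ) + 1)
  · intro j _
    rw [mem_Icc]
    exact ⟨by omega, j.isLt⟩
  · intro a _ b _ h
    exact upInj h
  · intro m hm
    rw [mem_Icc] at hm
    refine ⟨⟨m - 1, by omega⟩, mem_univ _, by simp; omega⟩
  · intro j _
    congr 1
    rw [← Finset.card_image_of_injective (P.filter (· < j)) (upInj (n := n))]
    congr 1
    ext m
    simp only [Finset.mem_image, mem_filter]
    constructor
    · rintro ⟨k, ⟨hk, hlt⟩, rfl⟩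
      rw [Fin.lt_def] at hlt
      exact ⟨⟨k, hk, rfl⟩, by omega⟩
    · rintro ⟨⟨k, hk, rfl⟩, hlt⟩
      exact ⟨k, ⟨hk, by rw [Fin.lt_def]; omega⟩, rfl⟩


/-- The initial condition:
`c_i(n,0) = Σ_{1 ≤ t_1 < ⋯ < t_i ≤ n} i!·(i+1)^{n−t_i}·Π_{u=1}^{i} u^{t_u−t_{u−1}−1}`,
where `t_0 = 0`. -/
theorem cB_initial (n i : ℕ) :
    cB n i 0 =
      ∑ s ∈ (Finset.Icc 1 n).powersetCard i,
        i.factorial * (i + 1) ^ (n - tEnum s i) *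
          ∏ u ∈ Finset.Icc 1 i, u ^ (tEnum s u - tEnum s (u - 1) - 1) := by
  rw [cB_eq_sum]
  apply Finset.sum_bij (fun (P : Finset (Fin n)) _ => P.image (fun j : Fin n => (j : ℕ) + 1))
  · intro P hP
    rw [mem_powersetCard] at hP ⊢
    constructor
    · intro m hm
      obtain ⟨j, -, rfl⟩ := mem_image.1 hm
      rw [mem_Icc]
      exact ⟨by omega, j.isLt⟩
    · rw [card_image_of_injective _ upInj, hP.2]
  · intro P hP Q hQ h
    have key : ∀ (R : Finset (Fin n)) (j : Fin n),
        j ∈ R ↔ (j : ℕ) + 1 ∈ R.image (fun k : Fin n => (k : ℕ) + 1) := by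
      intro R j
      constructor
      · exact fun h => mem_image_of_mem _ h
      · intro h
        obtain ⟨k, hk, he⟩ := mem_image.1 h
        have : k = j := Fin.ext (by omega)
        exact this ▸ hk
    ext j
    rw [key P j, key Q j, h]
  · intro s hs
    rw [mem_powersetCard] at hs
    have himg : (univ.filter fun j : Fin n => (j : ℕ) + 1 ∈ s).image
        (fun j : Fin n => (j : ℕ) + 1) = s := by
      ext m
      simp only [mem_image, mem_filter, mem_univ, true_and]
      constructor
      · rintro ⟨j, hj, rfl⟩
        exact hj
      · intro hm
        have hb := mem_Icc.1 (hs.1 hm)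
        refine ⟨⟨m - 1, by omega⟩, ?_, by simp; omega⟩
        simpa using (show m - 1 + 1 = m by omega).symm ▸ hm
    refine ⟨univ.filter (fun j : Fin n => (j : ℕ) + 1 ∈ s), ?_, himg⟩
    rw [mem_powersetCard]
    refine ⟨subset_univ _, ?_⟩
    have := congrArg Finset.card himg
    rwa [card_image_of_injective _ upInj, hs.2] at this
  · intro P hP
    have hsub : P.image (fun j : Fin n => (j : ℕ) + 1) ⊆ Icc 1 n := by
      intro m hm
      obtain ⟨j, -, rfl⟩ := mem_image.1 hm
      rw [mem_Icc]
      exact ⟨by omega, j.isLt⟩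
    have hc : (P.image (fun j : Fin n => (j : ℕ) + 1)).card = i := by
      rw [card_image_of_injective _ upInj, (mem_powersetCard.1 hP).2]
    rw [count_eq_V, V_eq_W, ← term_eq_W n _ hsub, hc]
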